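/- If T is a tree of order n ≥ 4, then √((n−1)² + 1) ≤ cDSO(T) ≤ √5 + (n−3)√2, with left equality if and only if T ≅ S_n and right equality if and only if T ≅ P_n. -/

import Mathlib

open SimpleGraph Finset Real

noncomputable def HSO {V : Type*} [Fintype V] (G : SimpleGraph V) : ℝ :=
  letI := Classical.decRel G.Adj
  ∑ e ∈ G.edgeFinset, Sym2.lift
    ⟨fun x y => Real.sqrt ((G.degree x : ℝ) ^ 2 + (G.degree y : ℝ) ^ 2) /
      min (G.degree x : ℝ) (G.degree y : ℝ),
     fun x y => by simp [add_comm, min_comm]⟩ e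

noncomputable def SO {V : Type*} [Fintype V] (G : SimpleGraph V) : ℝ :=
  letI := Classical.decRel G.Adj
  ∑ e ∈ G.edgeFinset, Sym2.lift
    ⟨fun x y => Real.sqrt ((G.degree x : ℝ) ^ 2 + (G.degree y : ℝ) ^ 2),
     fun x y => by simp [add_comm]⟩ e

noncomputable def cDSO {V : Type*} [Fintype V] (G : SimpleGraph V) : ℝ :=
  letI := Classical.decRel G.Adj
  ∑ e ∈ G.edgeFinset, Sym2.lift
    ⟨fun x y => Real.sqrt ((G.degree x : ℝ) ^ 2 + (G.degree y : ℝ) ^ 2) /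
      max (G.degree x : ℝ) (G.degree y : ℝ),
     fun x y => by simp [add_comm, max_comm]⟩ e

noncomputable def M1 {V : Type*} [Fintype V] (G : SimpleGraph V) : ℝ :=
  letI := Classical.decRel G.Adj
  ∑ e ∈ G.edgeFinset, Sym2.lift
    ⟨fun x y => (G.degree x : ℝ) + (G.degree y : ℝ),
     fun x y => by simp [add_comm]⟩ e

def IsRegularGraph {V : Type*} [Fintype V] (G : SimpleGraph V) : Prop :=
  letI := Classical.decRel G.Adj
  ∃ k, G.IsRegularOfDegree k

def addEdge {V : Type*} (G : SimpleGraph V) (u v : V) : SimpleGraph V :=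
  G ⊔ SimpleGraph.fromEdgeSet {s(u, v)}


section Aux

lemma sqrt_eq_sqrt {X Y : ℝ} (hX : 0 ≤ X) (hY : 0 ≤ Y) (h : Real.sqrt X = Real.sqrt Y) :
    X = Y := by rw [← Real.sq_sqrt hX, ← Real.sq_sqrt hY, h]

lemma Rcore {a b N : ℝ} (h1 : 1 ≤ a) (hab : a ≤ b) (hbN : b ≤ N) :
    Real.sqrt (N^2+1)/N ≤ Real.sqrt (a^2+b^2)/b ∧
    (Real.sqrt (a^2+b^2)/b = Real.sqrt (N^2+1)/N → a = 1 ∧ b = N) := by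
  have hb0 : (0:ℝ) < b := by linarith
  have hN0 : (0:ℝ) < N := by linarith
  have hbaN : b ≤ a*N := by nlinarith
  have h1' : Real.sqrt (N^2+1) * b = Real.sqrt ((N^2+1)*b^2) := by
    rw [Real.sqrt_mul (by positivity), Real.sqrt_sq hb0.le]
  have h2' : Real.sqrt (a^2+b^2) * N = Real.sqrt ((a^2+b^2)*N^2) := by
    rw [Real.sqrt_mul (by positivity), Real.sqrt_sq hN0.le]
  constructor
  · rw [div_le_div_iff₀ hN0 hb0, h1', h2']
    apply Real.sqrt_le_sqrt
    nlinarith [mul_le_mul hbaN hbaN hb0.le (by positivity : (0:ℝ) ≤ a*N)]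
  · intro h
    rw [div_eq_div_iff hb0.ne' hN0.ne', h2', h1'] at h
    have h4 : (a^2+b^2)*N^2 = (N^2+1)*b^2 := sqrt_eq_sqrt (by positivity) (by positivity) h
    have hb2 : b = a*N := by nlinarith
    have ha1 : a = 1 := by nlinarith
    exact ⟨ha1, by rw [hb2, ha1, one_mul]⟩

lemma Rcore2 {a b : ℝ} (h0 : 0 < a) (hab : a ≤ b) :
    Real.sqrt (a^2+b^2)/b ≤ Real.sqrt 2 ∧
    (Real.sqrt (a^2+b^2)/b = Real.sqrt 2 → a = b) := by
  have hb0 : (0:ℝ) < b := lt_of_lt_of_le h0 hab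
  have h1' : Real.sqrt 2 * b = Real.sqrt (2*b^2) := by
    rw [Real.sqrt_mul (by positivity), Real.sqrt_sq hb0.le]
  constructor
  · rw [div_le_iff₀ hb0, h1']
    apply Real.sqrt_le_sqrt; nlinarith
  · intro h
    rw [div_eq_iff hb0.ne', h1'] at h
    have h4 : a^2+b^2 = 2*b^2 := sqrt_eq_sqrt (by positivity) (by positivity) h
    nlinarith

lemma Rcore3 {b : ℝ} (h2 : 2 ≤ b) :
    Real.sqrt (1+b^2)/b ≤ Real.sqrt 5 / 2 ∧
    (Real.sqrt (1+b^2)/b = Real.sqrt 5 / 2 → b = 2) := by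
  have hb0 : (0:ℝ) < b := by linarith
  have h1' : Real.sqrt (1+b^2) * 2 = Real.sqrt ((1+b^2)*4) := by
    rw [show (4:ℝ) = 2^2 by norm_num, Real.sqrt_mul (by positivity),
      Real.sqrt_sq (by norm_num : (0:ℝ) ≤ 2)]
  have h2' : Real.sqrt 5 * b = Real.sqrt (5*b^2) := by
    rw [Real.sqrt_mul (by positivity), Real.sqrt_sq hb0.le]
  constructor
  · rw [div_le_div_iff₀ hb0 (by norm_num), h1', h2']
    apply Real.sqrt_le_sqrt; nlinarith
  · intro h
    rw [div_eq_div_iff hb0.ne' (by norm_num), h1', h2'] at h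
    have h4 : (1+b^2)*4 = 5*b^2 := sqrt_eq_sqrt (by positivity) (by positivity) h
    nlinarith

-- value computations
lemma Rval2 : Real.sqrt ((2:ℝ)^2+2^2)/max (2:ℝ) 2 = Real.sqrt 2 := by
  rw [show ((2:ℝ)^2+2^2) = 2^2*2 by norm_num, Real.sqrt_mul (by positivity),
    Real.sqrt_sq (by norm_num : (0:ℝ) ≤ 2)]
  norm_num

lemma Rval3 : Real.sqrt ((1:ℝ)^2+2^2)/max (1:ℝ) 2 = Real.sqrt 5 / 2 := by
  norm_num

variable {V : Type*} {G : SimpleGraph V}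

lemma getVert_mem_support {u v : V} (p : G.Walk u v) (i : ℕ) :
    p.getVert i ∈ p.support := by
  induction p generalizing i with
  | nil => simp [SimpleGraph.Walk.getVert]
  | cons h q ih =>
    cases i with
    | zero => simp [SimpleGraph.Walk.getVert]
    | succ k =>
      rw [SimpleGraph.Walk.getVert_cons_succ]
      simp only [SimpleGraph.Walk.support_cons, List.mem_cons]
      exact Or.inr (ih k)

lemma getVert_inj {u v : V} (p : G.Walk u v) (hp : p.IsPath) {i j : ℕ}
    (hi : i ≤ p.length) (hj : j ≤ p.length) (h : p.getVert i = p.getVert j) : i = j := by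
  induction p generalizing i j with
  | nil => simp only [SimpleGraph.Walk.length_nil] at hi hj; omega
  | cons hadj q ih =>
    rw [SimpleGraph.Walk.cons_isPath_iff] at hp
    cases i with
    | zero =>
      cases j with
      | zero => rfl
      | succ k =>
        exfalso
        rw [SimpleGraph.Walk.getVert_zero, SimpleGraph.Walk.getVert_cons_succ] at h
        exact hp.2 (h ▸ getVert_mem_support q k)
    | succ k =>
      cases j with
      | zero =>
        exfalso
        rw [SimpleGraph.Walk.getVert_zero, SimpleGraph.Walk.getVert_cons_succ] at h
        exact hp.2 (h ▸ getVert_mem_support q k)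
      | succ l =>
        rw [SimpleGraph.Walk.getVert_cons_succ, SimpleGraph.Walk.getVert_cons_succ] at h
        simp only [SimpleGraph.Walk.length_cons] at hi hj
        have := ih hp.1 (by omega) (by omega) h
        omega

lemma mem_edges_consec {u v x y : V} (p : G.Walk u v) (h : s(x,y) ∈ p.edges) :
    ∃ i < p.length, (p.getVert i = x ∧ p.getVert (i+1) = y) ∨
      (p.getVert i = y ∧ p.getVert (i+1) = x) := by
  induction p with
  | nil => simp at h
  | cons hadj q ih =>
    rw [SimpleGraph.Walk.edges_cons, List.mem_cons] at h
    rcases h with h | h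
    · refine ⟨0, by simp, ?_⟩
      rw [Sym2.eq_iff] at h
      simp only [SimpleGraph.Walk.getVert_zero, SimpleGraph.Walk.getVert_cons_succ]
      rcases h with ⟨rfl, rfl⟩ | ⟨rfl, rfl⟩
      · exact Or.inl ⟨rfl, rfl⟩
      · exact Or.inr ⟨rfl, rfl⟩
    · obtain ⟨i, hi, hor⟩ := ih h
      exact ⟨i+1, by simp; omega, by
        rw [SimpleGraph.Walk.getVert_cons_succ, SimpleGraph.Walk.getVert_cons_succ]
        exact hor⟩

/-- any non-terminal support vertex has a neighbor in the support -/
lemma exists_nbr_in_support {u v : V} (p : G.Walk u v) {w : V}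
    (hw : w ∈ p.support) (hwv : w ≠ v) : ∃ x ∈ p.support, G.Adj w x := by
  induction p with
  | nil => simp at hw; exact absurd hw hwv
  | cons hadj q ih =>
    simp only [SimpleGraph.Walk.support_cons, List.mem_cons] at hw
    rcases hw with rfl | hw
    · exact ⟨_, by simp [SimpleGraph.Walk.start_mem_support], hadj⟩
    · obtain ⟨x, hx, hadj'⟩ := ih hw hwv
      exact ⟨x, by simp [hx], hadj'⟩

/-- internal vertices of a path have two distinct neighbors in the support -/
lemma exists_two_nbrs_in_support {u v : V} (p : G.Walk u v) (hp : p.IsPath) {w : V}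
    (hw : w ∈ p.support) (hwu : w ≠ u) (hwv : w ≠ v) :
    ∃ x ∈ p.support, ∃ y ∈ p.support, x ≠ y ∧ G.Adj w x ∧ G.Adj w y := by
  induction p with
  | nil => simp at hw; exact absurd hw hwu
  | cons hadj q ih =>
    rename_i a b c
    rw [SimpleGraph.Walk.cons_isPath_iff] at hp
    simp only [SimpleGraph.Walk.support_cons, List.mem_cons] at hw
    rcases hw with rfl | hw
    · exact absurd rfl hwu
    · by_cases hwb : w = b
      · subst hwb
        obtain ⟨x, hx, hadjx⟩ := exists_nbr_in_support q hw hwv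
        refine ⟨a, by simp [SimpleGraph.Walk.start_mem_support], x, by simp [hx], ?_, hadj.symm, hadjx⟩
        rintro rfl
        exact hp.2 hx
      · obtain ⟨x, hx, y, hy, hxy, h1, h2⟩ := ih hp.1 hw hwb hwv
        exact ⟨x, by simp [hx], y, by simp [hy], hxy, h1, h2⟩

/-- crossing lemma -/
lemma exists_crossing {P : V → Prop} {a c : V} (q : G.Walk a c) (ha : P a) (hc : ¬ P c) :
    ∃ w z, P w ∧ ¬ P z ∧ G.Adj w z := by
  induction q with
  | nil => exact absurd ha hc
  | cons hadj q ih =>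
    rename_i x y z
    by_cases hy : P y
    · exact ih hy hc
    · exact ⟨x, y, ha, hy, hadj⟩


variable [Fintype V] [DecidableRel G.Adj]

lemma degree_one_nbr {a b : V} (hd : G.degree a = 1) (hab : G.Adj a b) :
    G.neighborFinset a = {b} := by
  obtain ⟨c, hc⟩ := Finset.card_eq_one.mp (by rw [G.card_neighborFinset_eq_degree, hd])
  have : b ∈ G.neighborFinset a := by rwa [SimpleGraph.mem_neighborFinset]
  rw [hc] at this ⊢
  rw [Finset.mem_singleton] at this
  rw [this]

lemma degree_pos_of_conn (hconn : G.Connected) (h2 : 2 ≤ Fintype.card V) (x : V) :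
    1 ≤ G.degree x := by
  obtain ⟨y, hy⟩ := Fintype.exists_ne_of_one_lt_card (by omega) x
  obtain ⟨w⟩ := hconn x y
  cases w with
  | nil => exact absurd rfl hy
  | cons h q =>
    rw [Nat.one_le_iff_ne_zero, ← G.card_neighborFinset_eq_degree]
    intro hc
    have h1 := Finset.card_eq_zero.mp hc
    have h2 : _ ∈ G.neighborFinset x := (SimpleGraph.mem_neighborFinset _ _ _).mpr h
    rw [h1] at h2
    simp at h2

/-- no two adjacent leaves in a connected graph with ≥ 3 vertices -/
lemma no_adjacent_leaves (hconn : G.Connected) (h3 : 3 ≤ Fintype.card V)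
    {a b : V} (hab : G.Adj a b) (hda : G.degree a = 1) (hdb : G.degree b = 1) : False := by
  classical
  obtain ⟨x, _, hxab⟩ : ∃ x ∈ (univ : Finset V), x ∉ ({a, b} : Finset V) := by
    apply Finset.exists_of_ssubset
    rw [Finset.ssubset_univ_iff]
    intro h
    have hcard := congrArg Finset.card h
    have hle := Finset.card_insert_le a ({b} : Finset V)
    simp only [Finset.card_univ, Finset.card_singleton] at hcard hle
    omega
  simp only [Finset.mem_insert, Finset.mem_singleton, not_or] at hxab
  obtain ⟨hxa, hxb⟩ := hxab
  obtain ⟨w⟩ := hconn a x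
  obtain ⟨pw, hp⟩ := w.toPath
  cases pw with
  | nil => exact hxa rfl
  | cons h q =>
    rename_i y
    have hy : y = b := by
      have hm : y ∈ G.neighborFinset a := (SimpleGraph.mem_neighborFinset _ _ _).mpr h
      rw [degree_one_nbr hda hab, Finset.mem_singleton] at hm
      exact hm
    subst hy
    rw [SimpleGraph.Walk.cons_isPath_iff] at hp
    cases q with
    | nil => exact hxb rfl
    | cons h2 q2 =>
      rename_i z
      have hz : z = a := by
        have hm : z ∈ G.neighborFinset y := (SimpleGraph.mem_neighborFinset _ _ _).mpr h2
        rw [degree_one_nbr hdb hab.symm, Finset.mem_singleton] at hm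
        exact hm
      apply hp.2
      rw [SimpleGraph.Walk.support_cons]
      exact List.mem_cons_of_mem _ (hz ▸ q2.start_mem_support)

lemma two_leaves (htree : G.IsTree) (h3 : 3 ≤ Fintype.card V) :
    ∃ u v : V, u ≠ v ∧ G.degree u = 1 ∧ G.degree v = 1 := by
  classical
  set L := univ.filter (fun x => G.degree x = 1) with hL
  have hsum : ∑ v, G.degree v = 2 * (Fintype.card V - 1) := by
    have hE := htree.card_edgeFinset
    rw [G.sum_degrees_eq_twice_card_edges]
    omega
  suffices h2L : 2 ≤ L.card by
    obtain ⟨u, hu, v, hv, huv⟩ := Finset.one_lt_card.mp (show 1 < L.card by omega)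
    rw [hL, Finset.mem_filter] at hu hv
    exact ⟨u, v, huv, hu.2, hv.2⟩
  by_contra hcon
  push_neg at hcon
  have hdeg2 : ∀ x ∈ univ \ L, 2 ≤ G.degree x := by
    intro x hx
    rw [Finset.mem_sdiff, hL, Finset.mem_filter] at hx
    have h1 := degree_pos_of_conn htree.isConnected (by omega) x
    have : ¬ G.degree x = 1 := fun h => hx.2 ⟨Finset.mem_univ x, h⟩
    omega
  have hsplit : ∑ v ∈ univ \ L, G.degree v + ∑ v ∈ L, G.degree v = ∑ v, G.degree v :=
    Finset.sum_sdiff (Finset.subset_univ L)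
  have hb1 : (univ \ L).card * 2 ≤ ∑ v ∈ univ \ L, G.degree v := by
    calc (univ \ L).card * 2 = ∑ _v ∈ univ \ L, 2 := by rw [Finset.sum_const, smul_eq_mul]
    _ ≤ _ := Finset.sum_le_sum hdeg2
  have hb2 : ∑ v ∈ L, G.degree v = L.card := by
    have h1 : ∀ x ∈ L, G.degree x = 1 := by
      intro x hx
      simp only [hL, Finset.mem_filter] at hx
      exact hx.2
    rw [Finset.sum_congr rfl h1, Finset.sum_const, smul_eq_mul, mul_one]
  have hcard : (univ \ L).card = Fintype.card V - L.card := by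
    rw [Finset.card_sdiff_of_subset (Finset.subset_univ L), Finset.card_univ]
  have hLle : L.card ≤ Fintype.card V := by
    rw [← Finset.card_univ]; exact Finset.card_le_card (Finset.subset_univ L)
  omega

lemma support_univ (hconn : G.Connected) {u v : V} (p : G.Walk u v) (hp : p.IsPath)
    (huv : u ≠ v) (hdu : G.degree u = 1) (hdv : G.degree v = 1)
    (hdeg : ∀ w, w ≠ u → w ≠ v → G.degree w = 2) (x : V) : x ∈ p.support := by
  classical
  by_contra hx
  obtain ⟨w0⟩ := hconn u x
  obtain ⟨w, z, hwP, hzP, hadj⟩ :=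
    exists_crossing (P := fun t => t ∈ p.support) w0 p.start_mem_support hx
  have hznbr : z ∈ G.neighborFinset w := (SimpleGraph.mem_neighborFinset _ _ _).mpr hadj
  by_cases hwu : w = u
  · subst hwu
    obtain ⟨x', hx', hax⟩ := exists_nbr_in_support p hwP huv
    have hne : z ≠ x' := fun h => hzP (h ▸ hx')
    have hsub : ({z, x'} : Finset V) ⊆ G.neighborFinset w := by
      intro t ht
      rcases Finset.mem_insert.mp ht with rfl | ht
      · exact hznbr
      · rw [Finset.mem_singleton] at ht
        subst ht
        exact (SimpleGraph.mem_neighborFinset _ _ _).mpr hax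
    have := Finset.card_le_card hsub
    rw [Finset.card_pair hne, G.card_neighborFinset_eq_degree, hdu] at this
    omega
  · by_cases hwv : w = v
    · subst hwv
      obtain ⟨x', hx', hax⟩ := exists_nbr_in_support p.reverse
        (by rw [SimpleGraph.Walk.support_reverse]; exact List.mem_reverse.mpr hwP)
        (Ne.symm huv)
      have hx'' : x' ∈ p.support := by
        rw [SimpleGraph.Walk.support_reverse] at hx'
        exact List.mem_reverse.mp hx'
      have hne : z ≠ x' := fun h => hzP (h ▸ hx'')
      have hsub : ({z, x'} : Finset V) ⊆ G.neighborFinset w := by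
        intro t ht
        rcases Finset.mem_insert.mp ht with rfl | ht
        · exact hznbr
        · rw [Finset.mem_singleton] at ht
          subst ht
          exact (SimpleGraph.mem_neighborFinset _ _ _).mpr hax
      have := Finset.card_le_card hsub
      rw [Finset.card_pair hne, G.card_neighborFinset_eq_degree, hdv] at this
      omega
    · obtain ⟨x', hx', y', hy', hxy, h1, h2⟩ := exists_two_nbrs_in_support p hp hwP hwu hwv
      have hzx : z ≠ x' := fun h => hzP (h ▸ hx')
      have hzy : z ≠ y' := fun h => hzP (h ▸ hy')
      have hsub : ({z, x', y'} : Finset V) ⊆ G.neighborFinset w := by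
        intro t ht
        rcases Finset.mem_insert.mp ht with rfl | ht
        · exact hznbr
        · rcases Finset.mem_insert.mp ht with rfl | ht
          · exact (SimpleGraph.mem_neighborFinset _ _ _).mpr h1
          · rw [Finset.mem_singleton] at ht
            subst ht
            exact (SimpleGraph.mem_neighborFinset _ _ _).mpr h2
      have hc3 : ({z, x', y'} : Finset V).card = 3 := by
        rw [Finset.card_insert_of_notMem (by simp [hzx, hzy]), Finset.card_pair hxy]
      have := Finset.card_le_card hsub
      rw [hc3, G.card_neighborFinset_eq_degree, hdeg w hwu hwv] at this
      omega

lemma path_iso (htree : G.IsTree) (n : ℕ) (hn : n = Fintype.card V) (hn2 : 2 ≤ n)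
    {u v : V} (huv : u ≠ v) (hdu : G.degree u = 1) (hdv : G.degree v = 1)
    (hdeg : ∀ w, w ≠ u → w ≠ v → G.degree w = 2) :
    Nonempty (G ≃g pathGraph n) := by
  classical
  obtain ⟨w0⟩ := htree.isConnected u v
  obtain ⟨pw, hp⟩ := w0.toPath
  have hall : ∀ x, x ∈ pw.support :=
    support_univ htree.isConnected pw hp huv hdu hdv hdeg
  have hlen : pw.length + 1 = n := by
    have h1 : pw.support.toFinset = Finset.univ := by
      ext t; simp [hall t]
    have h2 := List.toFinset_card_of_nodup hp.support_nodup
    rw [h1, Finset.card_univ] at h2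
    have h3 := pw.length_support
    omega
  set f : Fin n → V := fun i => pw.getVert i with hf
  have hinj : Function.Injective f := by
    intro i j h
    exact Fin.ext (getVert_inj pw hp (by have := i.isLt; omega)
      (by have := j.isLt; omega) h)
  have hbij : Function.Bijective f := by
    rw [Fintype.bijective_iff_injective_and_card]
    refine ⟨hinj, by simp [hn]⟩
  have hedges : pw.edges.toFinset = G.edgeFinset := by
    apply Finset.eq_of_subset_of_card_le
    · intro e he
      rw [List.mem_toFinset] at he
      exact SimpleGraph.mem_edgeFinset.mpr (pw.edges_subset_edgeSet he)
    · have hc1 := htree.card_edgeFinset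
      have hc2 : pw.edges.toFinset.card = pw.length := by
        rw [List.toFinset_card_of_nodup hp.isTrail.edges_nodup, pw.length_edges]
      omega
  have hadjiff : ∀ i j : Fin n, G.Adj (f i) (f j) ↔ (pathGraph n).Adj i j := by
    intro i j
    constructor
    · intro h
      have he : s(f i, f j) ∈ pw.edges := by
        have h1 : s(f i, f j) ∈ G.edgeFinset := SimpleGraph.mem_edgeFinset.mpr h
        rw [← hedges] at h1
        exact List.mem_toFinset.mp h1
      obtain ⟨k, hk, hor⟩ := mem_edges_consec pw he
      rw [pathGraph_adj]
      rcases hor with ⟨h1, h2⟩ | ⟨h1, h2⟩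
      · have hik : k = (i : ℕ) := getVert_inj pw hp (by omega) (by have := i.isLt; omega) h1
        have hjk : k + 1 = (j : ℕ) := getVert_inj pw hp (by omega) (by have := j.isLt; omega) h2
        exact Or.inl (by omega)
      · have hik : k = (j : ℕ) := getVert_inj pw hp (by omega) (by have := j.isLt; omega) h1
        have hjk : k + 1 = (i : ℕ) := getVert_inj pw hp (by omega) (by have := i.isLt; omega) h2
        exact Or.inr (by omega)
    · intro h
      rw [pathGraph_adj] at h
      rcases h with h | h
      · have hlt : (i:ℕ) < pw.length := by have := j.isLt; omega
        have ha := pw.adj_getVert_succ hlt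
        have : f j = pw.getVert ((i:ℕ)+1) := by rw [hf]; simp only; rw [← h]
        rw [this]
        exact ha
      · have hlt : (j:ℕ) < pw.length := by have := i.isLt; omega
        have ha := pw.adj_getVert_succ hlt
        have : f i = pw.getVert ((j:ℕ)+1) := by rw [hf]; simp only; rw [← h]
        rw [this]
        exact ha.symm
  refine ⟨SimpleGraph.Iso.symm ⟨Equiv.ofBijective f hbij, ?_⟩⟩
  intro a b
  exact hadjiff a b

lemma star_iso (hconn : G.Connected) (n : ℕ) (hn : n = Fintype.card V) (hn3 : 3 ≤ n)
    (c : V) (hc : G.degree c = n - 1) (hleaf : ∀ x, x ≠ c → G.degree x = 1) :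
    Nonempty (G ≃g completeBipartiteGraph (Fin 1) (Fin (n-1))) := by
  classical
  have hnbr : G.neighborFinset c = Finset.univ.erase c := by
    apply Finset.eq_of_subset_of_card_le
    · intro t ht
      rw [Finset.mem_erase]
      exact ⟨((SimpleGraph.mem_neighborFinset _ _ _).mp ht).ne', Finset.mem_univ t⟩
    · rw [Finset.card_erase_of_mem (Finset.mem_univ c), Finset.card_univ,
        G.card_neighborFinset_eq_degree, hc, ← hn]
  have hadjc : ∀ x, x ≠ c → G.Adj c x := by
    intro x hx
    have : x ∈ Finset.univ.erase c := Finset.mem_erase.mpr ⟨hx, Finset.mem_univ x⟩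
    rw [← hnbr] at this
    exact (SimpleGraph.mem_neighborFinset _ _ _).mp this
  have hadj_iff : ∀ a b : V, G.Adj a b ↔ ((a = c ∧ b ≠ c) ∨ (a ≠ c ∧ b = c)) := by
    intro a b
    constructor
    · intro h
      by_cases hac : a = c
      · refine Or.inl ⟨hac, ?_⟩
        rintro rfl
        exact G.irrefl (hac ▸ h)
      · by_cases hbc : b = c
        · exact Or.inr ⟨hac, hbc⟩
        · exact absurd (no_adjacent_leaves hconn (by omega) h (hleaf a hac) (hleaf b hbc)) not_false
    · rintro (⟨rfl, h⟩ | ⟨h, rfl⟩)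
      · exact hadjc _ h
      · exact (hadjc _ h).symm
  have hcard1 : Fintype.card {x : V // x = c} = 1 := Fintype.card_subtype_eq c
  have hcard2 : Fintype.card {x : V // ¬ x = c} = n - 1 := by
    rw [Fintype.card_subtype_compl, Fintype.card_subtype_eq, ← hn]
  let e1 : {x : V // x = c} ≃ Fin 1 := Fintype.equivFinOfCardEq hcard1
  let e2 : {x : V // ¬ x = c} ≃ Fin (n-1) := Fintype.equivFinOfCardEq hcard2
  let e : V ≃ (Fin 1 ⊕ Fin (n-1)) :=
    (Equiv.sumCompl (· = c)).symm.trans (Equiv.sumCongr e1 e2)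
  have hepos : ∀ a (h : a = c), e a = Sum.inl (e1 ⟨a, h⟩) := by
    intro a h
    simp only [e, Equiv.trans_apply, Equiv.sumCongr_apply]
    exact congrArg (Sum.map ⇑e1 ⇑e2) (Equiv.sumCompl_symm_apply_of_pos (p := fun x => x = c) h)
  have heneg : ∀ a (h : ¬ a = c), e a = Sum.inr (e2 ⟨a, h⟩) := by
    intro a h
    simp only [e, Equiv.trans_apply, Equiv.sumCongr_apply]
    exact congrArg (Sum.map ⇑e1 ⇑e2) (Equiv.sumCompl_symm_apply_of_neg (p := fun x => x = c) h)
  refine ⟨⟨e, ?_⟩⟩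
  intro a b
  rw [hadj_iff]
  by_cases hac : a = c <;> by_cases hbc : b = c
  · rw [hepos a hac, hepos b hbc]
    simp [hac, hbc]
  · rw [hepos a hac, heneg b hbc]
    simp [hac, hbc]
  · rw [heneg a hac, hepos b hbc]
    simp [hac, hbc]
  · rw [heneg a hac, heneg b hbc]
    simp [hac, hbc]


end Aux

instance pathGraphDec {n : ℕ} : DecidableRel (pathGraph n).Adj := fun a b =>
  decidable_of_iff _ pathGraph_adj.symm

instance cbgDec {α β : Type*} [DecidableEq α] [DecidableEq β] :
    DecidableRel (completeBipartiteGraph α β).Adj := fun a b => by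
  simp only [completeBipartiteGraph_adj]
  infer_instance

lemma iso_degree {V W : Type*} [Fintype V] [Fintype W] {G : SimpleGraph V}
    {H : SimpleGraph W} [DecidableRel G.Adj] [DecidableRel H.Adj]
    (f : G ≃g H) (x : V) : G.degree x = H.degree (f x) := by
  rw [← SimpleGraph.card_neighborSet_eq_degree, ← SimpleGraph.card_neighborSet_eq_degree]
  exact Fintype.card_congr (f.mapNeighborSet x)

lemma cbg_degree_inl {m : ℕ} (a : Fin 1) :
    (completeBipartiteGraph (Fin 1) (Fin m)).degree (Sum.inl a) = m := by
  have h : (completeBipartiteGraph (Fin 1) (Fin m)).neighborFinset (Sum.inl a) =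
      Finset.univ.image Sum.inr := by
    ext w
    simp only [SimpleGraph.mem_neighborFinset, completeBipartiteGraph_adj,
      Finset.mem_image, Finset.mem_univ, true_and]
    cases w <;> simp
  rw [← SimpleGraph.card_neighborFinset_eq_degree, h,
    Finset.card_image_of_injective _ Sum.inr_injective, Finset.card_univ, Fintype.card_fin]

lemma cbg_degree_inr {m : ℕ} (b : Fin m) :
    (completeBipartiteGraph (Fin 1) (Fin m)).degree (Sum.inr b) = 1 := by
  have h : (completeBipartiteGraph (Fin 1) (Fin m)).neighborFinset (Sum.inr b) =
      Finset.univ.image Sum.inl := by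
    ext w
    simp only [SimpleGraph.mem_neighborFinset, completeBipartiteGraph_adj,
      Finset.mem_image, Finset.mem_univ, true_and]
    cases w <;> simp
  rw [← SimpleGraph.card_neighborFinset_eq_degree, h,
    Finset.card_image_of_injective _ Sum.inl_injective, Finset.card_univ, Fintype.card_fin]

lemma pathGraph_degree_end {n : ℕ} (hn : 2 ≤ n) (i : Fin n)
    (hi : i.val = 0 ∨ i.val = n - 1) : (pathGraph n).degree i = 1 := by
  rcases hi with hi | hi
  · have h : (pathGraph n).neighborFinset i = {⟨1, by omega⟩} := by
      ext j
      simp only [SimpleGraph.mem_neighborFinset, pathGraph_adj, Finset.mem_singleton,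
        Fin.ext_iff, hi]
      omega
    rw [← SimpleGraph.card_neighborFinset_eq_degree, h, Finset.card_singleton]
  · have h : (pathGraph n).neighborFinset i = {⟨n-2, by omega⟩} := by
      ext j
      simp only [SimpleGraph.mem_neighborFinset, pathGraph_adj, Finset.mem_singleton,
        Fin.ext_iff, hi]
      have := j.isLt
      omega
    rw [← SimpleGraph.card_neighborFinset_eq_degree, h, Finset.card_singleton]

lemma pathGraph_degree_mid {n : ℕ} (i : Fin n) (h0 : 0 < i.val) (h1 : i.val < n - 1) :
    (pathGraph n).degree i = 2 := by
  have h : (pathGraph n).neighborFinset i = {⟨i.val - 1, by omega⟩, ⟨i.val + 1, by omega⟩} := by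
    ext j
    simp only [SimpleGraph.mem_neighborFinset, pathGraph_adj, Finset.mem_insert,
      Finset.mem_singleton, Fin.ext_iff]
    omega
  rw [← SimpleGraph.card_neighborFinset_eq_degree, h, Finset.card_insert_of_notMem
    (by simp only [Finset.mem_singleton, Fin.ext_iff]; omega), Finset.card_singleton]

noncomputable def Fterm {V : Type*} [Fintype V] (G : SimpleGraph V) [DecidableRel G.Adj] :
    Sym2 V → ℝ :=
  Sym2.lift
    ⟨fun x y => Real.sqrt ((G.degree x : ℝ) ^ 2 + (G.degree y : ℝ) ^ 2) /
      max (G.degree x : ℝ) (G.degree y : ℝ),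
     fun x y => by simp [add_comm, max_comm]⟩

lemma cDSO_eq {V : Type*} [Fintype V] (G : SimpleGraph V) [DecidableRel G.Adj] :
    cDSO G = ∑ e ∈ G.edgeFinset, Fterm G e := by
  unfold cDSO Fterm
  congr!

lemma Fterm_mk {V : Type*} [Fintype V] (G : SimpleGraph V) [DecidableRel G.Adj] (x y : V) :
    Fterm G s(x,y) = Real.sqrt ((G.degree x : ℝ) ^ 2 + (G.degree y : ℝ) ^ 2) /
      max (G.degree x : ℝ) (G.degree y : ℝ) := rfl

lemma Fterm_rep {V : Type*} [Fintype V] (G : SimpleGraph V) [DecidableRel G.Adj]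
    {e : Sym2 V} (he : e ∈ G.edgeFinset) : ∃ x y, e = s(x,y) ∧ G.Adj x y ∧
    Fterm G e = Real.sqrt ((G.degree x : ℝ) ^ 2 + (G.degree y : ℝ) ^ 2) /
      max (G.degree x : ℝ) (G.degree y : ℝ) := by
  induction e using Sym2.ind with
  | _ x y =>
    exact ⟨x, y, rfl, by simpa [SimpleGraph.mem_edgeFinset] using he, rfl⟩


lemma RstarL {N : ℝ} (h : 1 ≤ N) :
    Real.sqrt (N^2 + 1^2)/max N 1 = Real.sqrt (N^2+1)/N := by
  rw [max_eq_left h, one_pow]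

lemma RstarR {N : ℝ} (h : 1 ≤ N) :
    Real.sqrt (1^2 + N^2)/max 1 N = Real.sqrt (N^2+1)/N := by
  rw [max_eq_right h, one_pow, add_comm]

lemma Rsym {a b N : ℝ} (h1a : 1 ≤ a) (h1b : 1 ≤ b) (haN : a ≤ N) (hbN : b ≤ N) :
    Real.sqrt (N^2+1)/N ≤ Real.sqrt (a^2+b^2)/max a b ∧
    (Real.sqrt (a^2+b^2)/max a b = Real.sqrt (N^2+1)/N →
      ((a = 1 ∧ b = N) ∨ (b = 1 ∧ a = N))) ∧
    Real.sqrt (a^2+b^2)/max a b ≤ Real.sqrt 2 ∧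
    (Real.sqrt (a^2+b^2)/max a b = Real.sqrt 2 → a = b) := by
  rcases le_total a b with h | h
  · rw [max_eq_right h]
    exact ⟨(Rcore h1a h hbN).1, fun he => Or.inl ((Rcore h1a h hbN).2 he),
      (Rcore2 (by linarith) h).1, (Rcore2 (by linarith) h).2⟩
  · rw [max_eq_left h, add_comm (a^2)]
    exact ⟨(Rcore h1b h haN).1, fun he => Or.inr ((Rcore h1b h haN).2 he),
      (Rcore2 (by linarith) h).1, fun he => ((Rcore2 (by linarith) h).2 he).symm⟩

lemma Rleaf {b : ℝ} (hb : 2 ≤ b) :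
    Real.sqrt (1^2+b^2)/max 1 b ≤ Real.sqrt 5 / 2 ∧
    (Real.sqrt (1^2+b^2)/max 1 b = Real.sqrt 5 / 2 → b = 2) := by
  rw [max_eq_right (by linarith), one_pow]
  exact Rcore3 hb

section ValueLemmas

variable {V : Type*} [Fintype V] (T : SimpleGraph V) [DecidableRel T.Adj]

lemma stardeg_val (htree : T.IsTree) (n : ℕ) (hn : n = Fintype.card V) (hn4 : 4 ≤ n)
    (c : V) (hc : T.degree c = n - 1) (hleaf : ∀ x, x ≠ c → T.degree x = 1) :
    cDSO T = Real.sqrt (((n:ℝ)-1)^2 + 1) := by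
  classical
  have hconn := htree.isConnected
  have hN1 : (1:ℝ) ≤ (n:ℝ) - 1 := by
    have : (4:ℝ) ≤ (n:ℝ) := by exact_mod_cast hn4
    linarith
  have hcastN : ((n - 1 : ℕ) : ℝ) = (n:ℝ) - 1 := by
    rw [Nat.cast_sub (by omega : 1 ≤ n), Nat.cast_one]
  have hval : ∀ e ∈ T.edgeFinset, Fterm T e =
      Real.sqrt (((n:ℝ)-1)^2+1) / ((n:ℝ)-1) := by
    intro e he
    obtain ⟨x, y, rfl, hadj, hFe⟩ := Fterm_rep T he
    have hxy : x = c ∨ y = c := by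
      by_contra hcon
      push_neg at hcon
      exact no_adjacent_leaves hconn (by omega) hadj (hleaf x hcon.1) (hleaf y hcon.2)
    rw [hFe]
    rcases hxy with rfl | rfl
    · have hy : T.degree y = 1 := hleaf y (by rintro rfl; exact T.irrefl hadj)
      rw [hc, hy, hcastN, Nat.cast_one]
      exact RstarL hN1
    · have hx : T.degree x = 1 := hleaf x (by rintro rfl; exact T.irrefl hadj)
      rw [hc, hx, hcastN, Nat.cast_one]
      exact RstarR hN1
  have hEcard : T.edgeFinset.card = n - 1 := by
    have := htree.card_edgeFinset
    omega
  rw [cDSO_eq, Finset.sum_congr rfl hval, Finset.sum_const, nsmul_eq_mul, hEcard, hcastN]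
  field_simp

lemma pathdeg_val (htree : T.IsTree) (n : ℕ) (hn : n = Fintype.card V) (hn4 : 4 ≤ n)
    {u v : V} (huv : u ≠ v) (hdu : T.degree u = 1) (hdv : T.degree v = 1)
    (hdeg : ∀ w, w ≠ u → w ≠ v → T.degree w = 2) :
    cDSO T = Real.sqrt 5 + ((n:ℝ) - 3) * Real.sqrt 2 := by
  classical
  have hconn := htree.isConnected
  have h3 : 3 ≤ Fintype.card V := by omega
  obtain ⟨u', hu'⟩ := Finset.card_eq_one.mp
    (by rw [T.card_neighborFinset_eq_degree, hdu] : (T.neighborFinset u).card = 1)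
  have hadju : T.Adj u u' := by
    rw [← SimpleGraph.mem_neighborFinset, hu']
    exact Finset.mem_singleton_self u'
  obtain ⟨v', hv'⟩ := Finset.card_eq_one.mp
    (by rw [T.card_neighborFinset_eq_degree, hdv] : (T.neighborFinset v).card = 1)
  have hadjv : T.Adj v v' := by
    rw [← SimpleGraph.mem_neighborFinset, hv']
    exact Finset.mem_singleton_self v'
  have hu'v : u' ≠ v := by
    rintro rfl
    exact no_adjacent_leaves hconn h3 hadju hdu hdv
  have hv'u : v' ≠ u := by
    rintro rfl
    exact no_adjacent_leaves hconn h3 hadjv hdv hdu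
  have hu'u : u' ≠ u := fun h => T.irrefl (h ▸ hadju)
  have hv'v : v' ≠ v := fun h => T.irrefl (h ▸ hadjv)
  have hdu' : T.degree u' = 2 := hdeg u' hu'u hu'v
  have hdv' : T.degree v' = 2 := hdeg v' hv'u hv'v
  set eu : Sym2 V := s(u,u') with heu
  set ev : Sym2 V := s(v,v') with hev
  have heuev : eu ≠ ev := by
    intro h
    rcases Sym2.eq_iff.mp h with ⟨h1, h2⟩ | ⟨h1, h2⟩
    · exact huv h1
    · exact hu'v h2
  have hsub : ({eu, ev} : Finset (Sym2 V)) ⊆ T.edgeFinset := by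
    intro e he
    rcases Finset.mem_insert.mp he with rfl | he
    · exact SimpleGraph.mem_edgeFinset.mpr hadju
    · rw [Finset.mem_singleton] at he
      subst he
      exact SimpleGraph.mem_edgeFinset.mpr hadjv
  have hEcard : T.edgeFinset.card = n - 1 := by
    have := htree.card_edgeFinset
    omega
  have hrest : ∀ e ∈ T.edgeFinset \ {eu, ev}, Fterm T e = Real.sqrt 2 := by
    intro e he
    rw [Finset.mem_sdiff] at he
    obtain ⟨x, y, rfl, hadj, hFe⟩ := Fterm_rep T he.1
    have hnot : s(x,y) ∉ ({eu, ev} : Finset (Sym2 V)) := he.2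
    simp only [Finset.mem_insert, Finset.mem_singleton] at hnot
    push_neg at hnot
    have hxu : x ≠ u := by
      rintro rfl
      have : y ∈ T.neighborFinset x := (SimpleGraph.mem_neighborFinset _ _ _).mpr hadj
      rw [hu', Finset.mem_singleton] at this
      exact hnot.1 (by rw [heu, this])
    have hyu : y ≠ u := by
      rintro rfl
      have : x ∈ T.neighborFinset y := (SimpleGraph.mem_neighborFinset _ _ _).mpr hadj.symm
      rw [hu', Finset.mem_singleton] at this
      exact hnot.1 (by rw [heu, this, Sym2.eq_swap])
    have hxv : x ≠ v := by
      rintro rfl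
      have : y ∈ T.neighborFinset x := (SimpleGraph.mem_neighborFinset _ _ _).mpr hadj
      rw [hv', Finset.mem_singleton] at this
      exact hnot.2 (by rw [hev, this])
    have hyv : y ≠ v := by
      rintro rfl
      have : x ∈ T.neighborFinset y := (SimpleGraph.mem_neighborFinset _ _ _).mpr hadj.symm
      rw [hv', Finset.mem_singleton] at this
      exact hnot.2 (by rw [hev, this, Sym2.eq_swap])
    rw [hFe, hdeg x hxu hxv, hdeg y hyu hyv]
    push_cast
    exact Rval2
  have hsplit := Finset.sum_sdiff (f := Fterm T) hsub
  have hcard2 : ({eu, ev} : Finset (Sym2 V)).card = 2 := Finset.card_pair heuev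
  have hcards : (T.edgeFinset \ {eu, ev}).card = n - 3 := by
    rw [Finset.card_sdiff_of_subset hsub, hcard2, hEcard]
    omega
  have hpair : ∑ e ∈ ({eu, ev} : Finset (Sym2 V)), Fterm T e = Real.sqrt 5 := by
    rw [Finset.sum_pair heuev, heu, hev, Fterm_mk, Fterm_mk, hdu, hdu', hdv, hdv']
    push_cast
    rw [Rval3]
    ring
  have hrsum : ∑ e ∈ T.edgeFinset \ {eu, ev}, Fterm T e = ((n:ℝ) - 3) * Real.sqrt 2 := by
    rw [Finset.sum_congr rfl hrest, Finset.sum_const, nsmul_eq_mul, hcards,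
      Nat.cast_sub (by omega : 3 ≤ n)]
    norm_num
  rw [cDSO_eq, ← hsplit, hrsum, hpair]
  ring

end ValueLemmas


theorem stmt19 {V : Type*} [Fintype V] (T : SimpleGraph V) [DecidableRel T.Adj]
    (n : ℕ) (hn : n = Fintype.card V) (hn4 : 4 ≤ n) (htree : T.IsTree) :
    Real.sqrt (((n : ℝ) - 1) ^ 2 + 1) ≤ cDSO T ∧
    cDSO T ≤ Real.sqrt 5 + ((n : ℝ) - 3) * Real.sqrt 2 ∧
    (cDSO T = Real.sqrt (((n : ℝ) - 1) ^ 2 + 1) ↔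
      Nonempty (T ≃g completeBipartiteGraph (Fin 1) (Fin (n - 1)))) ∧
    (cDSO T = Real.sqrt 5 + ((n : ℝ) - 3) * Real.sqrt 2 ↔
      Nonempty (T ≃g pathGraph n)) := by
  classical
  have hconn := htree.isConnected
  have hcard : Fintype.card V = n := hn.symm
  have h2 : 2 ≤ Fintype.card V := by omega
  have h3 : 3 ≤ Fintype.card V := by omega
  have hnR : (4:ℝ) ≤ (n:ℝ) := by exact_mod_cast hn4
  have hN1 : (1:ℝ) ≤ (n:ℝ) - 1 := by linarith
  have hdeg_le : ∀ x : V, (T.degree x : ℝ) ≤ (n:ℝ) - 1 := by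
    intro x
    have h := T.degree_lt_card_verts x
    rw [hcard] at h
    have h' : (T.degree x : ℝ) + 1 ≤ (n:ℝ) := by exact_mod_cast h
    linarith
  have hdeg_ge : ∀ x : V, (1:ℝ) ≤ (T.degree x : ℝ) := fun x => by
    exact_mod_cast degree_pos_of_conn hconn h2 x
  have hEcard : T.edgeFinset.card = n - 1 := by
    have := htree.card_edgeFinset
    omega
  have hcastN : ((n - 1 : ℕ) : ℝ) = (n:ℝ) - 1 := by
    rw [Nat.cast_sub (by omega : 1 ≤ n), Nat.cast_one]
  have hlow : ∀ e ∈ T.edgeFinset,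
      Real.sqrt (((n:ℝ)-1)^2+1)/((n:ℝ)-1) ≤ Fterm T e := by
    intro e he
    obtain ⟨x, y, rfl, hadj, hFe⟩ := Fterm_rep T he
    rw [hFe]
    exact (Rsym (hdeg_ge x) (hdeg_ge y) (hdeg_le x) (hdeg_le y)).1
  have hup2 : ∀ e ∈ T.edgeFinset, Fterm T e ≤ Real.sqrt 2 := by
    intro e he
    obtain ⟨x, y, rfl, hadj, hFe⟩ := Fterm_rep T he
    rw [hFe]
    exact (Rsym (hdeg_ge x) (hdeg_ge y) (hdeg_le x) (hdeg_le y)).2.2.1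
  have hconstsum : ∑ _e ∈ T.edgeFinset, (Real.sqrt (((n:ℝ)-1)^2+1)/((n:ℝ)-1)) =
      Real.sqrt (((n:ℝ)-1)^2+1) := by
    rw [Finset.sum_const, nsmul_eq_mul, hEcard, hcastN]
    field_simp
  have hlower : Real.sqrt (((n:ℝ)-1)^2+1) ≤ cDSO T := by
    rw [cDSO_eq, ← hconstsum]
    exact Finset.sum_le_sum hlow
  -- leaves setup
  obtain ⟨u, v, huv, hdu, hdv⟩ := two_leaves htree h3
  obtain ⟨u', hu'⟩ := Finset.card_eq_one.mp
    (by rw [T.card_neighborFinset_eq_degree, hdu] : (T.neighborFinset u).card = 1)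
  have hadju : T.Adj u u' := by
    rw [← SimpleGraph.mem_neighborFinset, hu']
    exact Finset.mem_singleton_self u'
  obtain ⟨v', hv'⟩ := Finset.card_eq_one.mp
    (by rw [T.card_neighborFinset_eq_degree, hdv] : (T.neighborFinset v).card = 1)
  have hadjv : T.Adj v v' := by
    rw [← SimpleGraph.mem_neighborFinset, hv']
    exact Finset.mem_singleton_self v'
  have hu'v : u' ≠ v := by
    rintro rfl
    exact no_adjacent_leaves hconn h3 hadju hdu hdv
  have hv'u : v' ≠ u := by
    rintro rfl
    exact no_adjacent_leaves hconn h3 hadjv hdv hdu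
  have hu'u : u' ≠ u := fun h => T.irrefl (h ▸ hadju)
  have hv'v : v' ≠ v := fun h => T.irrefl (h ▸ hadjv)
  have hdu'2 : 2 ≤ T.degree u' := by
    have h1 := degree_pos_of_conn hconn h2 u'
    have h2' : T.degree u' ≠ 1 := fun hh => no_adjacent_leaves hconn h3 hadju hdu hh
    omega
  have hdv'2 : 2 ≤ T.degree v' := by
    have h1 := degree_pos_of_conn hconn h2 v'
    have h2' : T.degree v' ≠ 1 := fun hh => no_adjacent_leaves hconn h3 hadjv hdv hh
    omega
  set eu : Sym2 V := s(u,u') with heu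
  set ev : Sym2 V := s(v,v') with hev
  have heuev : eu ≠ ev := by
    intro h
    rcases Sym2.eq_iff.mp h with ⟨h1, h2⟩ | ⟨h1, h2⟩
    · exact huv h1
    · exact hu'v h2
  have hsub : ({eu, ev} : Finset (Sym2 V)) ⊆ T.edgeFinset := by
    intro e he
    rcases Finset.mem_insert.mp he with rfl | he
    · exact SimpleGraph.mem_edgeFinset.mpr hadju
    · rw [Finset.mem_singleton] at he
      subst he
      exact SimpleGraph.mem_edgeFinset.mpr hadjv
  have hcards : (T.edgeFinset \ {eu, ev}).card = n - 3 := by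
    rw [Finset.card_sdiff_of_subset hsub, Finset.card_pair heuev, hEcard]
    omega
  have hcastn3 : ((n - 3 : ℕ) : ℝ) = (n:ℝ) - 3 := by
    rw [Nat.cast_sub (by omega : 3 ≤ n)]
    norm_num
  have hFeu_eq : Fterm T eu = Real.sqrt (1^2 + (T.degree u' : ℝ)^2) /
      max 1 (T.degree u' : ℝ) := by
    rw [heu, Fterm_mk, hdu, Nat.cast_one]
  have hFev_eq : Fterm T ev = Real.sqrt (1^2 + (T.degree v' : ℝ)^2) /
      max 1 (T.degree v' : ℝ) := by
    rw [hev, Fterm_mk, hdv, Nat.cast_one]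
  have hbu : (2:ℝ) ≤ (T.degree u' : ℝ) := by exact_mod_cast hdu'2
  have hbv : (2:ℝ) ≤ (T.degree v' : ℝ) := by exact_mod_cast hdv'2
  have hFeu_le : Fterm T eu ≤ Real.sqrt 5 / 2 := by
    rw [hFeu_eq]; exact (Rleaf hbu).1
  have hFev_le : Fterm T ev ≤ Real.sqrt 5 / 2 := by
    rw [hFev_eq]; exact (Rleaf hbv).1
  have hrest_le : ∀ e ∈ T.edgeFinset \ {eu, ev}, Fterm T e ≤ Real.sqrt 2 :=
    fun e he => hup2 e (Finset.mem_sdiff.mp he).1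
  have hrest_sum_le : ∑ e ∈ T.edgeFinset \ {eu, ev}, Fterm T e ≤ ((n:ℝ)-3) * Real.sqrt 2 := by
    calc ∑ e ∈ T.edgeFinset \ {eu, ev}, Fterm T e
        ≤ ∑ _e ∈ T.edgeFinset \ {eu, ev}, Real.sqrt 2 := Finset.sum_le_sum hrest_le
      _ = ((n:ℝ)-3) * Real.sqrt 2 := by
          rw [Finset.sum_const, nsmul_eq_mul, hcards, hcastn3]
  have hsplit : ∑ e ∈ T.edgeFinset \ {eu, ev}, Fterm T e +
      ∑ e ∈ ({eu, ev} : Finset (Sym2 V)), Fterm T e = ∑ e ∈ T.edgeFinset, Fterm T e :=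
    Finset.sum_sdiff hsub
  have hpair_sum : ∑ e ∈ ({eu, ev} : Finset (Sym2 V)), Fterm T e = Fterm T eu + Fterm T ev :=
    Finset.sum_pair heuev
  have hupper : cDSO T ≤ Real.sqrt 5 + ((n:ℝ)-3) * Real.sqrt 2 := by
    rw [cDSO_eq, ← hsplit, hpair_sum]
    linarith
  refine ⟨hlower, hupper, ⟨?_, ?_⟩, ⟨?_, ?_⟩⟩
  · -- cDSO = star value → iso to star
    intro h
    have heq : ∀ e ∈ T.edgeFinset,
        Real.sqrt (((n:ℝ)-1)^2+1)/((n:ℝ)-1) = Fterm T e :=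
      (Finset.sum_eq_sum_iff_of_le hlow).1 (by rw [hconstsum, ← cDSO_eq, h])
    have hne : T.edgeFinset.Nonempty := Finset.card_pos.mp (by omega)
    obtain ⟨e₀, he₀⟩ := hne
    obtain ⟨x₀, y₀, rfl, hadj₀, hF₀⟩ := Fterm_rep T he₀
    have h₀ := (Rsym (hdeg_ge x₀) (hdeg_ge y₀) (hdeg_le x₀) (hdeg_le y₀)).2.1
      (by rw [← hF₀, ← heq _ he₀])
    have hcex : ∃ c : V, T.degree c = n - 1 := by
      rcases h₀ with ⟨_, hb⟩ | ⟨_, hb⟩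
      · refine ⟨y₀, ?_⟩
        have : (T.degree y₀ : ℝ) = ((n-1:ℕ):ℝ) := by rw [hcastN]; exact hb
        exact_mod_cast this
      · refine ⟨x₀, ?_⟩
        have : (T.degree x₀ : ℝ) = ((n-1:ℕ):ℝ) := by rw [hcastN]; exact hb
        exact_mod_cast this
    obtain ⟨c, hc⟩ := hcex
    have hnbrc : T.neighborFinset c = Finset.univ.erase c := by
      apply Finset.eq_of_subset_of_card_le
      · intro t ht
        rw [Finset.mem_erase]
        exact ⟨((SimpleGraph.mem_neighborFinset _ _ _).mp ht).ne', Finset.mem_univ t⟩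
      · rw [Finset.card_erase_of_mem (Finset.mem_univ c), Finset.card_univ,
          T.card_neighborFinset_eq_degree, hc, hcard]
    have hleaf : ∀ x, x ≠ c → T.degree x = 1 := by
      intro x hx
      have hadj : T.Adj c x := by
        have : x ∈ Finset.univ.erase c := Finset.mem_erase.mpr ⟨hx, Finset.mem_univ x⟩
        rw [← hnbrc] at this
        exact (SimpleGraph.mem_neighborFinset _ _ _).mp this
      have hmem : s(c,x) ∈ T.edgeFinset := SimpleGraph.mem_edgeFinset.mpr hadj
      have heqcx := heq _ hmem
      rw [Fterm_mk] at heqcx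
      have hres := (Rsym (hdeg_ge c) (hdeg_ge x) (hdeg_le c) (hdeg_le x)).2.1 heqcx.symm
      rcases hres with ⟨h1, _⟩ | ⟨hb, _⟩
      · exfalso
        have hc1 : T.degree c = 1 := by exact_mod_cast h1
        omega
      · exact_mod_cast hb
    exact star_iso hconn n hn (by omega) c hc hleaf
  · -- iso to star → cDSO = star value
    rintro ⟨f⟩
    set c := f.symm (Sum.inl 0) with hcdef
    have hfc : f c = Sum.inl 0 := f.apply_symm_apply _
    have hc : T.degree c = n - 1 := by
      rw [iso_degree f c, hfc, cbg_degree_inl]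
    have hleaf : ∀ x, x ≠ c → T.degree x = 1 := by
      intro x hx
      rcases hfx : f x with a | b
      · exfalso
        apply hx
        have ha : a = 0 := Subsingleton.elim a 0
        rw [hcdef, ← ha, ← hfx]
        exact (RelIso.symm_apply_apply f x).symm
      · rw [iso_degree f x, hfx, cbg_degree_inr]
    exact stardeg_val T htree n hn hn4 c hc hleaf
  · -- cDSO = path value → iso to path
    intro h
    have htot : ∑ e ∈ T.edgeFinset \ {eu, ev}, Fterm T e + (Fterm T eu + Fterm T ev) =
        Real.sqrt 5 + ((n:ℝ)-3) * Real.sqrt 2 := by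
      rw [← hpair_sum, hsplit, ← cDSO_eq, h]
    have heq1 : ∑ e ∈ T.edgeFinset \ {eu, ev}, Fterm T e = ((n:ℝ)-3) * Real.sqrt 2 := by
      linarith
    have hrest_eq : ∀ e ∈ T.edgeFinset \ {eu, ev}, Fterm T e = Real.sqrt 2 :=
      (Finset.sum_eq_sum_iff_of_le hrest_le).1 (by
        rw [heq1, Finset.sum_const, nsmul_eq_mul, hcards, hcastn3])
    have hnl : ∀ w, w ≠ u → w ≠ v → 2 ≤ T.degree w := by
      intro w hwu hwv
      have h1 := degree_pos_of_conn hconn h2 w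
      have hne1 : T.degree w ≠ 1 := by
        intro hw
        obtain ⟨w', hw'⟩ := Finset.card_eq_one.mp
          (by rw [T.card_neighborFinset_eq_degree, hw] : (T.neighborFinset w).card = 1)
        have hadjw : T.Adj w w' := by
          rw [← SimpleGraph.mem_neighborFinset, hw']
          exact Finset.mem_singleton_self w'
        have hnel : s(w,w') ∉ ({eu, ev} : Finset (Sym2 V)) := by
          simp only [Finset.mem_insert, Finset.mem_singleton, heu, hev]
          push_neg
          constructor
          · intro hcon
            rcases Sym2.eq_iff.mp hcon with ⟨hh1, _⟩ | ⟨hh1, _⟩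
            · exact absurd hh1 hwu
            · exact no_adjacent_leaves hconn h3 hadju hdu (hh1 ▸ hw)
          · intro hcon
            rcases Sym2.eq_iff.mp hcon with ⟨hh1, _⟩ | ⟨hh1, _⟩
            · exact absurd hh1 hwv
            · exact no_adjacent_leaves hconn h3 hadjv hdv (hh1 ▸ hw)
        have hmem : s(w,w') ∈ T.edgeFinset \ {eu, ev} :=
          Finset.mem_sdiff.mpr ⟨SimpleGraph.mem_edgeFinset.mpr hadjw, hnel⟩
        have hFval := hrest_eq _ hmem
        rw [Fterm_mk] at hFval
        have hres := (Rsym (hdeg_ge w) (hdeg_ge w') (hdeg_le w) (hdeg_le w')).2.2.2 hFval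
        have hw'1 : T.degree w' = 1 := by
          have : (T.degree w' : ℝ) = 1 := by
            rw [← hres]
            exact_mod_cast hw
          exact_mod_cast this
        exact no_adjacent_leaves hconn h3 hadjw hw hw'1
      omega
    have hsumdeg : ∑ x, T.degree x = 2 * (n - 1) := by
      rw [T.sum_degrees_eq_twice_card_edges, hEcard]
    have hsubuv : ({u, v} : Finset V) ⊆ Finset.univ := Finset.subset_univ _
    have hsplituv : ∑ x ∈ Finset.univ \ {u, v}, T.degree x +
        ∑ x ∈ ({u, v} : Finset V), T.degree x = ∑ x, T.degree x :=
      Finset.sum_sdiff hsubuv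
    have hpairdeg : ∑ x ∈ ({u, v} : Finset V), T.degree x = 2 := by
      rw [Finset.sum_pair huv, hdu, hdv]
    have hcardO : (Finset.univ \ ({u, v} : Finset V)).card = n - 2 := by
      rw [Finset.card_sdiff_of_subset hsubuv, Finset.card_pair huv, Finset.card_univ, hcard]
    have hOle : ∀ x ∈ Finset.univ \ ({u, v} : Finset V), 2 ≤ T.degree x := by
      intro x hx
      rw [Finset.mem_sdiff, Finset.mem_insert, Finset.mem_singleton] at hx
      push_neg at hx
      exact hnl x hx.2.1 hx.2.2
    have hOto : ∀ x ∈ Finset.univ \ ({u, v} : Finset V), 2 = T.degree x := by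
      apply (Finset.sum_eq_sum_iff_of_le hOle).1
      rw [Finset.sum_const, smul_eq_mul, hcardO]
      omega
    have hdeg2 : ∀ w, w ≠ u → w ≠ v → T.degree w = 2 := by
      intro w hwu hwv
      exact (hOto w (by
        rw [Finset.mem_sdiff, Finset.mem_insert, Finset.mem_singleton]
        exact ⟨Finset.mem_univ w, by push_neg; exact ⟨hwu, hwv⟩⟩)).symm
    exact path_iso htree n hn (by omega) huv hdu hdv hdeg2
  · -- iso to path → cDSO = path value
    rintro ⟨f⟩
    have hn0 : 0 < n := by omega
    have hn1' : n - 1 < n := by omega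
    have hi01 : (⟨0, hn0⟩ : Fin n) ≠ ⟨n-1, hn1'⟩ := by
      simp only [ne_eq, Fin.mk.injEq]
      omega
    set u₀ := f.symm ⟨0, hn0⟩ with hu₀
    set v₀ := f.symm ⟨n-1, hn1'⟩ with hv₀
    have hne : u₀ ≠ v₀ := fun hcon => hi01 (f.symm.injective hcon)
    have hdu₀ : T.degree u₀ = 1 := by
      rw [iso_degree f u₀, hu₀, RelIso.apply_symm_apply]
      exact pathGraph_degree_end (by omega) _ (Or.inl rfl)
    have hdv₀ : T.degree v₀ = 1 := by
      rw [iso_degree f v₀, hv₀, RelIso.apply_symm_apply]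
      exact pathGraph_degree_end (by omega) _ (Or.inr rfl)
    have hdmid : ∀ w, w ≠ u₀ → w ≠ v₀ → T.degree w = 2 := by
      intro w hw1 hw2
      rw [iso_degree f w]
      have hlt := (f w).isLt
      have hne0 : (f w).val ≠ 0 := by
        intro hcon
        apply hw1
        have : f w = (⟨0, hn0⟩ : Fin n) := Fin.ext hcon
        rw [hu₀, ← this, RelIso.symm_apply_apply]
      have hnelast : (f w).val ≠ n - 1 := by
        intro hcon
        apply hw2
        have : f w = (⟨n-1, hn1'⟩ : Fin n) := Fin.ext hcon
        rw [hv₀, ← this, RelIso.symm_apply_apply]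
      exact pathGraph_degree_mid (f w) (by omega) (by omega)
    exact pathdeg_val T htree n hn hn4 hne hdu₀ hdv₀ hdmid
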